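/- Let p, p̂, ε ≥ 0 and 0 < c ≤ 1. If |p̂ - p| ≤ c · max{√(pε), ε}, then (√p̂ - √p)² ≤ cε. -/

import Mathlib

/-- If `|p̂ - p| ≤ c · max(√(pε), ε)` then `(√p̂ - √p)² ≤ cε`. -/
theorem sqrt_perturbation_bound (p phat eps c : ℝ)
    (hp : 0 ≤ p) (hphat : 0 ≤ phat) (heps : 0 ≤ eps)
    (hc0 : 0 < c) (hc1 : c ≤ 1)
    (h : |phat - p| ≤ c * max (Real.sqrt (p * eps)) eps) :
    (Real.sqrt phat - Real.sqrt p)^2 ≤ c * eps := by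
  set a := Real.sqrt p with ha
  set b := Real.sqrt phat with hb
  set s := Real.sqrt eps with hs
  have ha0 : 0 ≤ a := Real.sqrt_nonneg p
  have hb0 : 0 ≤ b := Real.sqrt_nonneg phat
  have hs0 : 0 ≤ s := Real.sqrt_nonneg eps
  have ha2 : a ^ 2 = p := Real.sq_sqrt hp
  have hb2 : b ^ 2 = phat := Real.sq_sqrt hphat
  have hs2 : s ^ 2 = eps := Real.sq_sqrt heps
  have hmul : Real.sqrt (p * eps) = a * s := Real.sqrt_mul hp eps
  have hdiff : phat - p = (b - a) * (b + a) := by rw [← ha2, ← hb2]; ring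
  have habs : |phat - p| = |b - a| * (b + a) := by
    rw [hdiff, abs_mul, abs_of_nonneg (by linarith : (0:ℝ) ≤ b + a)]
  rw [habs, hmul] at h
  have hba : |b - a| ≤ b + a := by
    rcases abs_cases (b - a) with ⟨h1, _⟩ | ⟨h1, _⟩ <;> linarith
  have hsq : (b - a) ^ 2 = |b - a| ^ 2 := (sq_abs _).symm
  rcases le_or_gt (a * s) eps with hm | hm
  · rw [max_eq_right hm] at h
    nlinarith [abs_nonneg (b - a)]
  · rw [max_eq_left hm.le] at h
    -- eps < a * s, i.e. s^2 < a * s, so s > 0 would give a > s; also forces s > 0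
    have hspos : 0 < s := by
      by_contra hcon
      push_neg at hcon
      have : s = 0 := le_antisymm hcon hs0
      rw [this] at hm hs2; simp at hm; linarith
    have hapos : 0 < a := by nlinarith
    have hkey : |b - a| ≤ c * s := by
      have h1 : |b - a| * a ≤ c * (a * s) := by
        nlinarith [abs_nonneg (b - a)]
      have := le_of_mul_le_mul_right (by linarith : |b - a| * a ≤ (c * s) * a) hapos
      exact this
    calc (b - a) ^ 2 = |b - a| ^ 2 := hsq
      _ ≤ (c * s) ^ 2 := pow_le_pow_left₀ (abs_nonneg _) hkey 2
      _ = c ^ 2 * eps := by rw [mul_pow, hs2]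
      _ ≤ c * eps := by nlinarith [mul_nonneg (mul_nonneg hc0.le (sub_nonneg.mpr hc1)) heps]
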